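/- Over a field of characteristic zero, the trivial representation of S_n occurs in the arity-n component Lie(n) of the Lie operad only for n = 1, and the sign representation occurs only for n = 1 and n = 2 (with multiplicity one in each case, where Lie(1) ≅ triv and Lie(2) ≅ sgn). -/

import Mathlib

open scoped Module

/-- The right-normed Lie word `[x_{a₁},[x_{a₂},[...,x_{a_r}]]]` in the free Lie
algebra. -/
noncomputable def lieWord (k : Type) [Field k] (n : ℕ) :
    List (Fin n) → FreeLieAlgebra k (Fin n)
  | [] => 0
  | [a] => FreeLieAlgebra.of k a
  | a :: (b :: t) => ⁅FreeLieAlgebra.of k a, lieWord k n (b :: t)⁆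

/-- The arity-`n` component `Lie(n)` of the Lie operad over `k`: the multilinear part
of the free Lie algebra on `n` generators, spanned by the right-normed Lie words on
all permutations of the generators. -/
noncomputable def LieN (k : Type) [Field k] (n : ℕ) :
    Submodule k (FreeLieAlgebra k (Fin n)) :=
  Submodule.span k
    {v | ∃ σ : Equiv.Perm (Fin n), v = lieWord k n ((List.finRange n).map σ)}

/-- The action of a permutation `σ ∈ S_n` on the free Lie algebra by relabelling the
generators. -/
noncomputable def relabel (k : Type) [Field k] (n : ℕ) (σ : Equiv.Perm (Fin n)) :
    FreeLieAlgebra k (Fin n) →ₗ[k] FreeLieAlgebra k (Fin n) :=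
  (FreeLieAlgebra.lift k (fun i => FreeLieAlgebra.of k (σ i))).toLinearMap

/-- The trivial-isotypic part (the `S_n`-invariants) of `Lie(n)`. -/
noncomputable def trivPart (k : Type) [Field k] (n : ℕ) :
    Submodule k (FreeLieAlgebra k (Fin n)) :=
  LieN k n ⊓ ⨅ σ : Equiv.Perm (Fin n),
    LinearMap.ker (relabel k n σ - LinearMap.id)

/-- The sign-isotypic part of `Lie(n)`: elements on which each `σ ∈ S_n` acts by
`sign σ`. -/
noncomputable def signPart (k : Type) [Field k] (n : ℕ) :
    Submodule k (FreeLieAlgebra k (Fin n)) :=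
  LieN k n ⊓ ⨅ σ : Equiv.Perm (Fin n),
    LinearMap.ker (relabel k n σ - ((Equiv.Perm.sign σ : ℤ) : k) • LinearMap.id)

section AuxLemmas
variable (k : Type) [Field k]


lemma relabel_of (n : ℕ) (σ : Equiv.Perm (Fin n)) (a : Fin n) :
    relabel k n σ (FreeLieAlgebra.of k a) = FreeLieAlgebra.of k (σ a) :=
  FreeLieAlgebra.lift_of_apply _ a

lemma relabel_lie (n : ℕ) (σ : Equiv.Perm (Fin n)) (x y : FreeLieAlgebra k (Fin n)) :
    relabel k n σ ⁅x, y⁆ = ⁅relabel k n σ x, relabel k n σ y⁆ :=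
  LieHom.map_lie _ x y

lemma relabel_lieWord (n : ℕ) (σ : Equiv.Perm (Fin n)) :
    ∀ l : List (Fin n), relabel k n σ (lieWord k n l) = lieWord k n (l.map σ)
  | [] => by simp [lieWord]
  | [a] => by simp [lieWord, relabel_of]
  | a :: b :: t => by
    rw [lieWord, List.map_cons, List.map_cons, lieWord, relabel_lie, relabel_of,
      ← List.map_cons, relabel_lieWord n σ (b :: t)]

lemma lieWord_cons (n : ℕ) (a : Fin n) (t : List (Fin n)) (h : t ≠ []) :
    lieWord k n (a :: t) = ⁅FreeLieAlgebra.of k a, lieWord k n t⁆ := by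
  cases t with
  | nil => exact absurd rfl h
  | cons b t => rw [lieWord]

lemma lieWord_append_pair (n : ℕ) (a b : Fin n) :
    ∀ l : List (Fin n), lieWord k n (l ++ [a, b]) = - lieWord k n (l ++ [b, a])
  | [] => by
    simp only [List.nil_append]
    rw [lieWord, lieWord, lieWord, lieWord]
    exact (lie_skew _ _).symm
  | c :: l => by
    rw [List.cons_append, List.cons_append,
      lieWord_cons k n c (l ++ [a, b]) (by simp),
      lieWord_cons k n c (l ++ [b, a]) (by simp),
      lieWord_append_pair n a b l, lie_neg]

lemma lieWord_append_triple (n : ℕ) (a b c : Fin n) :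
    ∀ l : List (Fin n), lieWord k n (l ++ [a, b, c]) + lieWord k n (l ++ [b, c, a])
      + lieWord k n (l ++ [c, a, b]) = 0
  | [] => by
    simp only [List.nil_append]
    rw [lieWord, lieWord, lieWord, lieWord, lieWord, lieWord, lieWord, lieWord, lieWord]
    exact lie_jacobi _ _ _
  | d :: l => by
    rw [List.cons_append, List.cons_append, List.cons_append,
      lieWord_cons k n d (l ++ [a, b, c]) (by simp),
      lieWord_cons k n d (l ++ [b, c, a]) (by simp),
      lieWord_cons k n d (l ++ [c, a, b]) (by simp),
      ← lie_add, ← lie_add, lieWord_append_triple n a b c l, lie_zero]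

variable [CharZero k]

lemma finRange_succ_concat (n : ℕ) :
    List.finRange (n+1) = (List.finRange n).map Fin.castSucc ++ [Fin.last n] := by
  rw [← List.ofFn_id, List.ofFn_succ', ← List.ofFn_id n]
  simp [List.concat_eq_append, List.ofFn_eq_map, Function.comp]

lemma sum_words_eq_zero (m : ℕ) :
    ∑ σ : Equiv.Perm (Fin (m+2)), lieWord k (m+2) ((List.finRange (m+2)).map σ) = 0 := by
  set i : Fin (m+2) := (Fin.last m).castSucc with hi
  set j : Fin (m+2) := Fin.last (m+1) with hj
  set L : List (Fin (m+2)) := (List.finRange m).map (Fin.castSucc ∘ Fin.castSucc) with hL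
  have hsplit : List.finRange (m+2) = L ++ [i, j] := by
    rw [finRange_succ_concat, finRange_succ_concat m, List.map_append, List.map_map]
    simp [hL, hi, hj]
  have hmemL : ∀ x ∈ L, x ≠ i ∧ x ≠ j := by
    intro x hx
    simp only [hL, List.mem_map] at hx
    obtain ⟨y, -, rfl⟩ := hx
    constructor <;> intro hc <;>
      [ (have := congrArg Fin.val hc); (have := congrArg Fin.val hc)] <;>
      simp [hi, hj, Fin.last] at this <;> omega
  set s : Equiv.Perm (Fin (m+2)) := Equiv.swap i j with hs
  set f : Equiv.Perm (Fin (m+2)) → FreeLieAlgebra k (Fin (m+2)) :=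
    fun σ => lieWord k (m+2) ((List.finRange (m+2)).map σ) with hf
  have key : ∀ σ, f (σ * s) = - f σ := by
    intro σ
    have h1 : (List.finRange (m+2)).map σ = L.map σ ++ [σ i, σ j] := by
      rw [hsplit]; simp
    have h2 : (List.finRange (m+2)).map (σ * s) = L.map σ ++ [σ j, σ i] := by
      rw [hsplit]
      simp only [List.map_append]
      congr 1
      · apply List.map_congr_left
        intro x hx
        have := hmemL x hx
        simp [Equiv.Perm.mul_apply, hs, Equiv.swap_apply_of_ne_of_ne this.1 this.2]
      · simp [Equiv.Perm.mul_apply, hs, Equiv.swap_apply_left, Equiv.swap_apply_right]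
    rw [hf]
    simp only [h1, h2]
    exact lieWord_append_pair k (m+2) (σ j) (σ i) (L.map σ)
  have hsum : ∑ σ, f σ = - ∑ σ, f σ := by
    calc ∑ σ, f σ = ∑ σ, f ((Equiv.mulRight s) σ) := (Equiv.sum_comp (Equiv.mulRight s) f).symm
    _ = ∑ σ, - f σ := by
        apply Finset.sum_congr rfl
        intro σ _
        exact key σ
    _ = - ∑ σ, f σ := by rw [Finset.sum_neg_distrib]
  have h2 : (2 : k) • (∑ σ, f σ) = 0 := by
    rw [two_smul]
    nth_rewrite 2 [hsum]
    exact add_neg_cancel _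
  have := smul_eq_zero.mp h2
  simpa [hf] using this.resolve_left (by norm_num)

lemma sum_sign_words_eq_zero (m : ℕ) :
    ∑ σ : Equiv.Perm (Fin (m+3)), ((Equiv.Perm.sign σ : ℤ) : k) •
      lieWord k (m+3) ((List.finRange (m+3)).map σ) = 0 := by
  set i : Fin (m+3) := ((Fin.last m).castSucc).castSucc with hi
  set j : Fin (m+3) := (Fin.last (m+1)).castSucc with hj
  set p : Fin (m+3) := Fin.last (m+2) with hp
  have hij : i ≠ j := by
    intro hc; have := congrArg Fin.val hc
    simp only [hi, hj, Fin.coe_castSucc, Fin.val_last] at this; omega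
  have hip : i ≠ p := by
    intro hc; have := congrArg Fin.val hc
    simp only [hi, hp, Fin.coe_castSucc, Fin.val_last] at this; omega
  have hjp : j ≠ p := by
    intro hc; have := congrArg Fin.val hc
    simp only [hj, hp, Fin.coe_castSucc, Fin.val_last] at this; omega
  set L : List (Fin (m+3)) := (List.finRange m).map (Fin.castSucc ∘ Fin.castSucc ∘ Fin.castSucc)
    with hL
  have hsplit : List.finRange (m+3) = L ++ [i, j, p] := by
    rw [finRange_succ_concat, finRange_succ_concat (m+1), finRange_succ_concat m]
    simp [hL, hi, hj, hp, List.map_append, List.map_map, List.append_assoc, Function.comp]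
  have hmemL : ∀ x ∈ L, x ≠ i ∧ x ≠ j ∧ x ≠ p := by
    intro x hx
    simp only [hL, List.mem_map] at hx
    obtain ⟨y, -, rfl⟩ := hx
    refine ⟨?_, ?_, ?_⟩ <;> intro hc <;> (have := congrArg Fin.val hc) <;>
      simp only [Function.comp_apply, Fin.coe_castSucc, Fin.val_last, hi, hj, hp] at this <;>
      omega
  -- the 3-cycle i ↦ j ↦ p ↦ i
  set c : Equiv.Perm (Fin (m+3)) := Equiv.swap i p * Equiv.swap i j with hc
  have hci : c i = j := by
    simp [hc, Equiv.Perm.mul_apply, Equiv.swap_apply_left,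
      Equiv.swap_apply_of_ne_of_ne hij.symm hjp]
  have hcj : c j = p := by
    simp [hc, Equiv.Perm.mul_apply, Equiv.swap_apply_right, Equiv.swap_apply_left]
  have hcp : c p = i := by
    simp [hc, Equiv.Perm.mul_apply, Equiv.swap_apply_of_ne_of_ne hip.symm hjp.symm,
      Equiv.swap_apply_right]
  have hcfix : ∀ x ∈ L, c x = x := by
    intro x hx
    obtain ⟨h1, h2, h3⟩ := hmemL x hx
    simp [hc, Equiv.Perm.mul_apply, Equiv.swap_apply_of_ne_of_ne h1 h2,
      Equiv.swap_apply_of_ne_of_ne h1 h3]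
  have hsignc : Equiv.Perm.sign c = 1 := by
    simp [hc, Equiv.Perm.sign_swap hip, Equiv.Perm.sign_swap hij]
  set w : Equiv.Perm (Fin (m+3)) → FreeLieAlgebra k (Fin (m+3)) :=
    fun σ => lieWord k (m+3) ((List.finRange (m+3)).map σ) with hw
  set f : Equiv.Perm (Fin (m+3)) → FreeLieAlgebra k (Fin (m+3)) :=
    fun σ => ((Equiv.Perm.sign σ : ℤ) : k) • w σ with hf
  have hLmap : ∀ σ τ : Equiv.Perm (Fin (m+3)),
      (∀ x ∈ L, τ x = x) → L.map (σ * τ) = L.map σ := by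
    intro σ τ hτ
    apply List.map_congr_left
    intro x hx
    simp [Equiv.Perm.mul_apply, hτ x hx]
  have hmul : ∀ σ τ : Equiv.Perm (Fin (m+3)),
      (List.finRange (m+3)).map (σ * τ) = L.map (σ * τ) ++ [σ (τ i), σ (τ j), σ (τ p)] := by
    intro σ τ
    rw [hsplit]
    simp [Equiv.Perm.mul_apply]
  have hw1 : ∀ σ, w σ = lieWord k (m+3) (L.map σ ++ [σ i, σ j, σ p]) := by
    intro σ
    show lieWord k (m+3) ((List.finRange (m+3)).map σ) = _
    rw [hsplit]; simp
  have hcfix2 : ∀ x ∈ L, (c * c) x = x := fun x hx => by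
    simp [Equiv.Perm.mul_apply, hcfix x hx]
  have hwc : ∀ σ, w (σ * c) = lieWord k (m+3) (L.map σ ++ [σ j, σ p, σ i]) := by
    intro σ
    have h := hmul σ c
    rw [hLmap σ c hcfix, hci, hcj, hcp] at h
    show lieWord k (m+3) ((List.finRange (m+3)).map (σ * c)) = _
    rw [h]
  have hwc2 : ∀ σ, w (σ * (c * c)) = lieWord k (m+3) (L.map σ ++ [σ p, σ i, σ j]) := by
    intro σ
    have h := hmul σ (c * c)
    rw [hLmap σ (c * c) hcfix2] at h
    have e1 : (c * c) i = p := by simp [Equiv.Perm.mul_apply, hci, hcj]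
    have e2 : (c * c) j = i := by simp [Equiv.Perm.mul_apply, hcj, hcp]
    have e3 : (c * c) p = j := by simp [Equiv.Perm.mul_apply, hcp, hci]
    rw [e1, e2, e3] at h
    show lieWord k (m+3) ((List.finRange (m+3)).map (σ * (c * c))) = _
    rw [h]
  have key : ∀ σ, f σ + f (σ * c) + f (σ * (c * c)) = 0 := by
    intro σ
    have e1 : Equiv.Perm.sign (σ * c) = Equiv.Perm.sign σ := by simp [hsignc]
    have e2 : Equiv.Perm.sign (σ * (c * c)) = Equiv.Perm.sign σ := by simp [hsignc]
    show ((Equiv.Perm.sign σ : ℤ) : k) • w σ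
        + ((Equiv.Perm.sign (σ * c) : ℤ) : k) • w (σ * c)
        + ((Equiv.Perm.sign (σ * (c * c)) : ℤ) : k) • w (σ * (c * c)) = 0
    rw [e1, e2, ← smul_add, ← smul_add, hw1 σ, hwc σ, hwc2 σ,
      lieWord_append_triple k (m+3) (σ i) (σ j) (σ p) (L.map σ), smul_zero]
  have h3 : (3 : k) • (∑ σ, f σ) = 0 := by
    have e1 : ∑ σ, f σ = ∑ σ, f (σ * c) := (Equiv.sum_comp (Equiv.mulRight c) f).symm
    have e2 : ∑ σ, f σ = ∑ σ, f (σ * (c * c)) := (Equiv.sum_comp (Equiv.mulRight (c * c)) f).symm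
    have hz : (∑ σ, f σ) + (∑ σ, f σ) + (∑ σ, f σ) = 0 := by
      nth_rewrite 2 [e1]
      nth_rewrite 2 [e2]
      rw [← Finset.sum_add_distrib, ← Finset.sum_add_distrib]
      exact Finset.sum_eq_zero fun σ _ => key σ
    rw [show (3 : k) = 1 + 1 + 1 by norm_num, add_smul, add_smul, one_smul]
    exact hz
  have h0 := (smul_eq_zero.mp h3).resolve_left (by norm_num)
  exact h0

omit [CharZero k] in
lemma relabel_word (n : ℕ) (σ τ : Equiv.Perm (Fin n)) :
    relabel k n τ (lieWord k n ((List.finRange n).map σ))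
      = lieWord k n ((List.finRange n).map (τ * σ)) := by
  rw [relabel_lieWord, List.map_map]
  rfl

lemma trivPart_eq_bot (n : ℕ) (hn : 2 ≤ n) : trivPart k n = ⊥ := by
  obtain ⟨m, rfl⟩ : ∃ m, n = m + 2 := ⟨n - 2, by omega⟩
  rw [eq_bot_iff]
  rintro v hv
  rw [trivPart, Submodule.mem_inf] at hv
  obtain ⟨hv1, hv2⟩ := hv
  simp only [Submodule.mem_iInf, LinearMap.mem_ker, LinearMap.sub_apply, LinearMap.id_apply,
    sub_eq_zero] at hv2
  set T : FreeLieAlgebra k (Fin (m+2)) →ₗ[k] FreeLieAlgebra k (Fin (m+2)) :=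
    ∑ τ : Equiv.Perm (Fin (m+2)), relabel k (m+2) τ with hT
  have hTv : T v = (Fintype.card (Equiv.Perm (Fin (m+2)))) • v := by
    rw [hT, LinearMap.sum_apply]
    simp only [hv2]
    rw [Finset.sum_const, Finset.card_univ]
  have hker : LieN k (m+2) ≤ LinearMap.ker T := by
    rw [LieN, Submodule.span_le]
    rintro x ⟨σ, rfl⟩
    rw [SetLike.mem_coe, LinearMap.mem_ker, hT, LinearMap.sum_apply]
    rw [Finset.sum_congr rfl fun τ _ => relabel_word k (m+2) σ τ]
    calc ∑ τ : Equiv.Perm (Fin (m+2)), lieWord k (m+2) ((List.finRange (m+2)).map (τ * σ))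
        = ∑ μ : Equiv.Perm (Fin (m+2)), lieWord k (m+2) ((List.finRange (m+2)).map μ) :=
          Equiv.sum_comp (Equiv.mulRight σ)
            (fun μ => lieWord k (m+2) ((List.finRange (m+2)).map μ))
      _ = 0 := sum_words_eq_zero k m
  have hzero : (Fintype.card (Equiv.Perm (Fin (m+2)))) • v = 0 := by
    rw [← hTv]
    exact LinearMap.mem_ker.mp (hker hv1)
  rw [← Nat.cast_smul_eq_nsmul k] at hzero
  rcases smul_eq_zero.mp hzero with h | h
  · exact absurd h (by exact_mod_cast Fintype.card_ne_zero)
  · simpa using h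

lemma signPart_eq_bot (n : ℕ) (hn : 3 ≤ n) : signPart k n = ⊥ := by
  obtain ⟨m, rfl⟩ : ∃ m, n = m + 3 := ⟨n - 3, by omega⟩
  rw [eq_bot_iff]
  rintro v hv
  rw [signPart, Submodule.mem_inf] at hv
  obtain ⟨hv1, hv2⟩ := hv
  simp only [Submodule.mem_iInf, LinearMap.mem_ker, LinearMap.sub_apply, LinearMap.smul_apply,
    LinearMap.id_apply, sub_eq_zero] at hv2
  set ε : Equiv.Perm (Fin (m+3)) → k := fun σ => ((Equiv.Perm.sign σ : ℤ) : k) with hε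
  have hεmul : ∀ a b : Equiv.Perm (Fin (m+3)), ε (a * b) = ε a * ε b := by
    intro a b
    simp [hε, ← Int.cast_mul, ← Units.val_mul]
  have hεsq : ∀ a : Equiv.Perm (Fin (m+3)), ε a * ε a = 1 := by
    intro a
    rw [← hεmul]
    simp [hε]
  set T : FreeLieAlgebra k (Fin (m+3)) →ₗ[k] FreeLieAlgebra k (Fin (m+3)) :=
    ∑ τ : Equiv.Perm (Fin (m+3)), ε τ • relabel k (m+3) τ with hT
  have hTv : T v = (Fintype.card (Equiv.Perm (Fin (m+3)))) • v := by
    rw [hT, LinearMap.sum_apply]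
    have : ∀ τ : Equiv.Perm (Fin (m+3)), (ε τ • relabel k (m+3) τ) v = v := by
      intro τ
      rw [LinearMap.smul_apply, hv2 τ, smul_smul, hεsq, one_smul]
    rw [Finset.sum_congr rfl fun τ _ => this τ]
    rw [Finset.sum_const, Finset.card_univ]
  have hker : LieN k (m+3) ≤ LinearMap.ker T := by
    rw [LieN, Submodule.span_le]
    rintro x ⟨σ, rfl⟩
    rw [SetLike.mem_coe, LinearMap.mem_ker, hT, LinearMap.sum_apply]
    have step : ∀ τ : Equiv.Perm (Fin (m+3)),
        (ε τ • relabel k (m+3) τ) (lieWord k (m+3) ((List.finRange (m+3)).map σ))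
        = ε σ • (ε (τ * σ) • lieWord k (m+3) ((List.finRange (m+3)).map (τ * σ))) := by
      intro τ
      rw [LinearMap.smul_apply, relabel_word, smul_smul]
      congr 1
      rw [hεmul, mul_comm (ε τ) (ε σ), ← mul_assoc, hεsq, one_mul]
    rw [Finset.sum_congr rfl fun τ _ => step τ, ← Finset.smul_sum]
    have : ∑ τ : Equiv.Perm (Fin (m+3)),
        ε (τ * σ) • lieWord k (m+3) ((List.finRange (m+3)).map (τ * σ))
        = ∑ μ : Equiv.Perm (Fin (m+3)), ε μ • lieWord k (m+3) ((List.finRange (m+3)).map μ) :=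
      Equiv.sum_comp (Equiv.mulRight σ)
        (fun μ => ε μ • lieWord k (m+3) ((List.finRange (m+3)).map μ))
    rw [this, sum_sign_words_eq_zero k m, smul_zero]
  have hzero : (Fintype.card (Equiv.Perm (Fin (m+3)))) • v = 0 := by
    rw [← hTv]
    exact LinearMap.mem_ker.mp (hker hv1)
  rw [← Nat.cast_smul_eq_nsmul k] at hzero
  rcases smul_eq_zero.mp hzero with h | h
  · exact absurd h (by exact_mod_cast Fintype.card_ne_zero)
  · simpa using h

omit [CharZero k] in
lemma relabel_one (n : ℕ) (x : FreeLieAlgebra k (Fin n)) :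
    relabel k n (1 : Equiv.Perm (Fin n)) x = x := by
  have h1 : (fun i : Fin n => FreeLieAlgebra.of k ((1 : Equiv.Perm (Fin n)) i))
      = ⇑(LieHom.id : FreeLieAlgebra k (Fin n) →ₗ⁅k⁆ FreeLieAlgebra k (Fin n))
        ∘ FreeLieAlgebra.of k := by
    funext i; simp
  show (FreeLieAlgebra.lift k (fun i : Fin n => FreeLieAlgebra.of k
    ((1 : Equiv.Perm (Fin n)) i))) x = x
  rw [h1, FreeLieAlgebra.lift_comp_of]
  rfl

omit [CharZero k] in
lemma perm_one_eq (σ : Equiv.Perm (Fin 1)) : σ = 1 :=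
  Equiv.ext fun x => Subsingleton.elim _ _

omit [CharZero k] in
lemma trivPart_one : trivPart k 1 = LieN k 1 := by
  refine le_antisymm inf_le_left (le_inf le_rfl (le_iInf fun σ => ?_))
  intro x _
  rw [LinearMap.mem_ker, LinearMap.sub_apply, LinearMap.id_apply, perm_one_eq σ,
    relabel_one, sub_self]

omit [CharZero k] in
lemma signPart_one : signPart k 1 = LieN k 1 := by
  refine le_antisymm inf_le_left (le_inf le_rfl (le_iInf fun σ => ?_))
  intro x _
  rw [LinearMap.mem_ker, LinearMap.sub_apply, LinearMap.smul_apply, LinearMap.id_apply,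
    perm_one_eq σ]
  simp [relabel_one]

attribute [local instance] LieRing.ofAssociativeRing

omit [CharZero k] in
lemma of_ne_zero (n : ℕ) (a : Fin n) : FreeLieAlgebra.of k a ≠ 0 := by
  intro h
  have := congrArg (FreeLieAlgebra.lift k (fun _ : Fin n => (1 : k))) h
  simp [FreeLieAlgebra.lift_of_apply] at this

omit [CharZero k] in
lemma lieN_one : LieN k 1 = Submodule.span k {FreeLieAlgebra.of k (0 : Fin 1)} := by
  rw [LieN]
  congr 1
  ext v
  simp only [Set.mem_setOf_eq, Set.mem_singleton_iff]
  constructor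
  · rintro ⟨σ, rfl⟩
    have h1 : (List.finRange 1).map σ = [0] := by
      have : List.finRange 1 = [0] := by decide
      rw [this]
      simp [Subsingleton.elim (σ 0) (0 : Fin 1)]
    rw [h1, lieWord]
  · rintro rfl
    refine ⟨1, ?_⟩
    have : List.finRange 1 = [0] := by decide
    rw [this]
    simp only [List.map_cons, List.map_nil, Equiv.Perm.coe_one, id_eq]
    rw [lieWord]

omit [CharZero k] in
lemma finrank_lieN_one : Module.finrank k (LieN k 1) = 1 := by
  rw [lieN_one]
  exact finrank_span_singleton (of_ne_zero k 1 0)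

omit [CharZero k] in
lemma lie_of_ne_zero :
    ⁅FreeLieAlgebra.of k (0 : Fin 2), FreeLieAlgebra.of k (1 : Fin 2)⁆ ≠ 0 := by
  intro h
  have := congrArg (FreeLieAlgebra.lift k
    (fun i : Fin 2 => Matrix.single (0 : Fin 2) i (1 : k))) h
  simp only [LieHom.map_lie, map_zero, FreeLieAlgebra.lift_of_apply] at this
  rw [Ring.lie_def] at this
  have h01 : Matrix.single (0 : Fin 2) (0 : Fin 2) (1 : k)
      * Matrix.single (0 : Fin 2) (1 : Fin 2) (1 : k)
      = Matrix.single (0 : Fin 2) (1 : Fin 2) (1 : k) := by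
    rw [Matrix.single_mul_single_same, mul_one]
  have h11 : Matrix.single (0 : Fin 2) (1 : Fin 2) (1 : k)
      * Matrix.single (0 : Fin 2) (0 : Fin 2) (1 : k) = 0 := by
    rw [Matrix.single_mul_single_of_ne]
    decide
  rw [h01, h11, sub_zero] at this
  have h2 := congrFun (congrFun this 0) 1
  simp [Matrix.single_apply_same] at h2

omit [CharZero k] in
lemma finRange_two : List.finRange 2 = [0, 1] := by decide

omit [CharZero k] in
lemma perm_two_eq (σ : Equiv.Perm (Fin 2)) : σ = 1 ∨ σ = Equiv.swap 0 1 := by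
  revert σ; decide

omit [CharZero k] in
lemma lieWord_onezero :
    lieWord k 2 [(1 : Fin 2), 0] = - lieWord k 2 [(0 : Fin 2), 1] := by
  have := lieWord_append_pair k 2 (1 : Fin 2) 0 []
  simpa using this

omit [CharZero k] in
lemma lieN_two : LieN k 2 = Submodule.span k
    {⁅FreeLieAlgebra.of k (0 : Fin 2), FreeLieAlgebra.of k (1 : Fin 2)⁆} := by
  have hone : lieWord k 2 ((List.finRange 2).map (1 : Equiv.Perm (Fin 2)))
      = ⁅FreeLieAlgebra.of k (0 : Fin 2), FreeLieAlgebra.of k (1 : Fin 2)⁆ := by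
    rw [finRange_two]
    simp only [List.map_cons, List.map_nil, Equiv.Perm.coe_one, id_eq]
    rw [lieWord, lieWord]
  have hswap : lieWord k 2 ((List.finRange 2).map (Equiv.swap (0 : Fin 2) 1))
      = - ⁅FreeLieAlgebra.of k (0 : Fin 2), FreeLieAlgebra.of k (1 : Fin 2)⁆ := by
    rw [finRange_two]
    simp only [List.map_cons, List.map_nil, Equiv.swap_apply_left, Equiv.swap_apply_right]
    rw [lieWord_onezero k]
    rw [lieWord, lieWord]
  apply le_antisymm
  · rw [LieN, Submodule.span_le]
    rintro x ⟨σ, rfl⟩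
    rcases perm_two_eq σ with rfl | rfl
    · rw [hone]
      exact Submodule.subset_span rfl
    · rw [hswap]
      exact Submodule.neg_mem _ (Submodule.subset_span rfl)
  · rw [Submodule.span_le, Set.singleton_subset_iff]
    exact Submodule.subset_span ⟨1, hone.symm⟩

omit [CharZero k] in
lemma finrank_lieN_two : Module.finrank k (LieN k 2) = 1 := by
  rw [lieN_two]
  exact finrank_span_singleton (lie_of_ne_zero k)

omit [CharZero k] in
lemma signPart_two : signPart k 2 = LieN k 2 := by
  refine le_antisymm inf_le_left (le_inf le_rfl (le_iInf fun σ => ?_))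
  rw [LieN, Submodule.span_le]
  rintro x ⟨τ, rfl⟩
  rw [SetLike.mem_coe, LinearMap.mem_ker, LinearMap.sub_apply, LinearMap.smul_apply,
    LinearMap.id_apply, sub_eq_zero, relabel_word]
  have hone : lieWord k 2 ((List.finRange 2).map (1 : Equiv.Perm (Fin 2)))
      = ⁅FreeLieAlgebra.of k (0 : Fin 2), FreeLieAlgebra.of k (1 : Fin 2)⁆ := by
    rw [finRange_two]
    simp only [List.map_cons, List.map_nil, Equiv.Perm.coe_one, id_eq]
    rw [lieWord, lieWord]
  have hswap : lieWord k 2 ((List.finRange 2).map (Equiv.swap (0 : Fin 2) 1))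
      = - ⁅FreeLieAlgebra.of k (0 : Fin 2), FreeLieAlgebra.of k (1 : Fin 2)⁆ := by
    rw [finRange_two]
    simp only [List.map_cons, List.map_nil, Equiv.swap_apply_left, Equiv.swap_apply_right]
    rw [lieWord_onezero k]
    rw [lieWord, lieWord]
  have hsw : Equiv.Perm.sign (Equiv.swap (0 : Fin 2) 1) = -1 :=
    Equiv.Perm.sign_swap (by decide)
  rcases perm_two_eq σ with rfl | rfl <;> rcases perm_two_eq τ with rfl | rfl
  · rw [one_mul]; simp
  · rw [one_mul]; simp
  · rw [mul_one, hswap, hone, hsw]; norm_num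
  · rw [Equiv.swap_mul_self, hone, hswap, hsw]; norm_num

end AuxLemmas

/-- Over a field of characteristic zero, the trivial representation of `S_n` occurs in
`Lie(n)` only for `n = 1`, and the sign representation occurs only for `n = 1` and
`n = 2`, with multiplicity one in each case (where `Lie(1) ≅ triv` and
`Lie(2) ≅ sgn`). -/

theorem lie_operad_triv_and_sign_multiplicities (k : Type) [Field k] [CharZero k] :
    (∀ n, 2 ≤ n → trivPart k n = ⊥) ∧
    trivPart k 1 = LieN k 1 ∧
    Module.finrank k (LieN k 1) = 1 ∧
    (∀ n, 3 ≤ n → signPart k n = ⊥) ∧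
    signPart k 1 = LieN k 1 ∧
    signPart k 2 = LieN k 2 ∧
    Module.finrank k (LieN k 2) = 1 := by
  exact ⟨fun n hn => trivPart_eq_bot k n hn, trivPart_one k, finrank_lieN_one k,
    fun n hn => signPart_eq_bot k n hn, signPart_one k, signPart_two k, finrank_lieN_two k⟩
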